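/- Let k be a field of characteristic zero, C an affine k-domain, and C[T] a polynomial ring in one variable over C. Then ML*(C[T]) ⊆ ML(C), where ML* is the intersection of kernels of locally nilpotent derivations admitting a slice, and ML is the intersection of kernels of all locally nilpotent derivations. -/

import Mathlib

/-- A derivation is *locally nilpotent* if every element is killed by some iterate. -/
def IsLND {k B : Type*} [CommRing k] [CommRing B] [Algebra k B]
    (D : Derivation k B B) : Prop :=
  ∀ b : B, ∃ n : ℕ, (D.toLinearMap ^ n) b = 0

/-- A derivation *has a slice* if `1` is in its image. -/
def HasSlice {k B : Type*} [CommRing k] [CommRing B] [Algebra k B]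
    (D : Derivation k B B) : Prop :=
  ∃ s : B, D s = 1

/-- The kernel of a derivation, as a subalgebra. -/
def lndKer {k B : Type*} [CommRing k] [CommRing B] [Algebra k B]
    (D : Derivation k B B) : Subalgebra k B where
  carrier := {b | D b = 0}
  mul_mem' := by
    intro a b ha hb
    simp only [Set.mem_setOf_eq] at *
    simp [D.leibniz, ha, hb]
  add_mem' := by
    intro a b ha hb
    simp only [Set.mem_setOf_eq] at *
    simp [ha, hb]
  algebraMap_mem' := fun r => D.map_algebraMap r

/-- The Makar-Limanov invariant: intersection of the kernels of all locally
nilpotent derivations. -/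
def ML (k : Type*) {B : Type*} [CommRing k] [CommRing B] [Algebra k B] : Subalgebra k B :=
  ⨅ D ∈ {D : Derivation k B B | IsLND D}, lndKer D

/-- The Makar-Limanov–Freudenburg invariant: intersection of the kernels of all locally
nilpotent derivations admitting a slice (equal to `⊤ = B` if none exist). -/
def MLstar (k : Type*) {B : Type*} [CommRing k] [CommRing B] [Algebra k B] : Subalgebra k B :=
  ⨅ D ∈ {D : Derivation k B B | IsLND D ∧ HasSlice D}, lndKer D

/-- A `k`-algebra is *rigid* if it admits no nonzero locally nilpotent derivation. -/
def IsRigid (k B : Type*) [CommRing k] [CommRing B] [Algebra k B] : Prop :=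
  ∀ D : Derivation k B B, IsLND D → D = 0

/-- The extension `A ⊆ B` has transcendence degree `n`. -/
def TrdegEq (A B : Type*) [CommRing A] [CommRing B] [Algebra A B] (n : ℕ) : Prop :=
  (∃ x : Fin n → B, AlgebraicIndependent A x) ∧
    ∀ x : Fin (n + 1) → B, ¬ AlgebraicIndependent A x

/-- A subring `A` of a domain `B` is *inert* if `f * g ∈ A` for nonzero `f, g`
implies `f ∈ A` and `g ∈ A`. -/
def IsInert {B : Type*} [CommRing B] (A : Subring B) : Prop :=
  ∀ f g : B, f ≠ 0 → g ≠ 0 → f * g ∈ A → f ∈ A ∧ g ∈ A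

section Aux

open Polynomial

variable {k C : Type*} [Field k] [CommRing C] [Algebra k C]

lemma mem_lndKer_iff {B : Type*} [CommRing B] [Algebra k B] (D : Derivation k B B) (x : B) :
    x ∈ lndKer D ↔ D x = 0 := Iff.rfl

/-- Coefficient-wise application of a linear map to a polynomial. -/
noncomputable def mapCoeff (D : C →ₗ[k] C) : Polynomial C →ₗ[k] Polynomial C where
  toFun p := ⟨AddMonoidAlgebra.ofCoeff (Finsupp.mapRange D D.map_zero p.toFinsupp.coeff)⟩
  map_add' p q := Polynomial.toFinsupp_injective <| by
    simp only [Polynomial.toFinsupp_add]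
    exact congrArg AddMonoidAlgebra.ofCoeff (Finsupp.mapRange_add (map_add D) _ _)
  map_smul' a p := Polynomial.toFinsupp_injective <| by
    simp only [Polynomial.toFinsupp_smul, RingHom.id_apply]
    exact congrArg AddMonoidAlgebra.ofCoeff (Finsupp.mapRange_smul a _ (D.map_smul a))

lemma coeff_mapCoeff (D : C →ₗ[k] C) (p : Polynomial C) (n : ℕ) :
    (mapCoeff D p).coeff n = D (p.coeff n) := rfl

lemma coeff_pow_mapCoeff (D : C →ₗ[k] C) (i : ℕ) (p : Polynomial C) (n : ℕ) :
    ((mapCoeff D ^ i) p).coeff n = (D ^ i) (p.coeff n) := by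
  induction i generalizing p with
  | zero => simp
  | succ m ih =>
      rw [pow_succ', pow_succ', Module.End.mul_apply, Module.End.mul_apply, coeff_mapCoeff, ih]

lemma mapCoeff_mul (D : Derivation k C C) (p q : Polynomial C) :
    mapCoeff D.toLinearMap (p * q) =
      mapCoeff D.toLinearMap p * q + p * mapCoeff D.toLinearMap q := by
  apply Polynomial.ext
  intro n
  rw [coeff_mapCoeff, Polynomial.coeff_add, Polynomial.coeff_mul, Polynomial.coeff_mul,
    Polynomial.coeff_mul, map_sum, ← Finset.sum_add_distrib]
  refine Finset.sum_congr rfl fun x _ => ?_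
  rw [coeff_mapCoeff, coeff_mapCoeff]
  simp only [Derivation.coeFn_coe]
  have := D.leibniz (p.coeff x.1) (q.coeff x.2)
  simp only [smul_eq_mul] at this
  rw [this]
  ring

/-- The extension of `D` to `C[X]` acting coefficientwise, plus `d/dX`. -/
noncomputable def extDer (D : Derivation k C C) :
    Derivation k (Polynomial C) (Polynomial C) where
  toLinearMap := mapCoeff D.toLinearMap +
    (Polynomial.derivative (R := C)).restrictScalars k
  map_one_eq_zero' := by
    show mapCoeff D.toLinearMap 1 + Polynomial.derivative 1 = 0
    rw [Polynomial.derivative_one, add_zero]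
    apply Polynomial.ext
    intro n
    rw [coeff_mapCoeff, Polynomial.coeff_zero, Polynomial.coeff_one]
    split
    · exact D.map_one_eq_zero
    · exact D.toLinearMap.map_zero
  leibniz' p q := by
    show mapCoeff D.toLinearMap (p * q) + Polynomial.derivative (p * q) =
      p • (mapCoeff D.toLinearMap q + Polynomial.derivative q) +
      q • (mapCoeff D.toLinearMap p + Polynomial.derivative p)
    rw [mapCoeff_mul, Polynomial.derivative_mul, smul_eq_mul, smul_eq_mul]
    ring

lemma extDer_apply (D : Derivation k C C) (p : Polynomial C) :
    extDer D p = mapCoeff D.toLinearMap p + Polynomial.derivative p := rfl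

lemma extDer_X (D : Derivation k C C) : extDer D (Polynomial.X) = 1 := by
  rw [extDer_apply, Polynomial.derivative_X]
  convert zero_add (1 : Polynomial C)
  apply Polynomial.ext
  intro n
  rw [coeff_mapCoeff, Polynomial.coeff_zero, Polynomial.coeff_X]
  split
  · exact D.map_one_eq_zero
  · exact D.toLinearMap.map_zero

lemma extDer_C (D : Derivation k C C) (a : C) :
    extDer D (Polynomial.C a) = Polynomial.C (D a) := by
  rw [extDer_apply, Polynomial.derivative_C, add_zero]
  apply Polynomial.ext
  intro n
  rw [coeff_mapCoeff, Polynomial.coeff_C, Polynomial.coeff_C]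
  split
  · subst ‹n = 0›; rfl
  · exact D.toLinearMap.map_zero

lemma linearMap_mul_natCast (D : C →ₗ[k] C) (a : C) (c : ℕ) :
    D (a * (c : C)) = D a * (c : C) := by
  rw [mul_comm, ← nsmul_eq_mul, map_nsmul, nsmul_eq_mul, mul_comm]

lemma derivative_closure (D : C →ₗ[k] C) (m : ℕ) (q : Polynomial C)
    (hq : ∀ n, (D ^ m) (q.coeff n) = 0) :
    ∀ n, (D ^ m) ((Polynomial.derivative q).coeff n) = 0 := by
  intro n
  rw [Polynomial.coeff_derivative]
  have : ((n : C) + 1) = ((n + 1 : ℕ) : C) := by push_cast; ring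
  rw [this, linearMap_mul_natCast, hq, zero_mul]

lemma pow_eventually_zero (D : C →ₗ[k] C) {m m' : ℕ} {x : C}
    (h : (D ^ m) x = 0) (hle : m ≤ m') : (D ^ m') x = 0 := by
  rw [← Nat.sub_add_cancel hle, pow_add, Module.End.mul_apply, h, map_zero]

lemma extDer_isLND (D : Derivation k C C) (hD : IsLND D) : IsLND (extDer D) := by
  intro p
  -- choose a uniform nilpotency bound for all coefficients of p
  have key : ∀ x : C, ∃ m, (D.toLinearMap ^ m) x = 0 := hD
  choose f hf using key
  set m := (Finset.range (p.natDegree + 1)).sup (fun n => f (p.coeff n)) with hm_def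
  have hm : ∀ n, (D.toLinearMap ^ m) (p.coeff n) = 0 := by
    intro n
    by_cases h : n ≤ p.natDegree
    · exact pow_eventually_zero _ (hf (p.coeff n))
        (Finset.le_sup (f := fun n => f (p.coeff n))
          (Finset.mem_range.2 (Nat.lt_succ_of_le h)))
    · rw [Polynomial.coeff_eq_zero_of_natDegree_lt (lt_of_not_ge h), map_zero]
  set L : Polynomial C →ₗ[k] Polynomial C := mapCoeff D.toLinearMap with hL
  set M : Polynomial C →ₗ[k] Polynomial C :=
    (Polynomial.derivative (R := C)).restrictScalars k with hM
  have hMpow : ∀ (j : ℕ) (q : Polynomial C), (M ^ j) q = Polynomial.derivative^[j] q := by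
    intro j q
    induction j generalizing q with
    | zero => simp
    | succ i ih =>
        rw [pow_succ', Module.End.mul_apply, ih, Function.iterate_succ_apply']
        rfl
  have hcomm : Commute L M := by
    apply LinearMap.ext
    intro q
    apply Polynomial.ext
    intro n
    show (L (M q)).coeff n = (M (L q)).coeff n
    have hMc : ∀ r : Polynomial C, M r = Polynomial.derivative r := fun r => rfl
    rw [hMc, hMc, hL, coeff_mapCoeff,
      Polynomial.coeff_derivative, Polynomial.coeff_derivative, coeff_mapCoeff]
    have hc : ((n : C) + 1) = ((n + 1 : ℕ) : C) := by push_cast; ring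
    rw [hc, linearMap_mul_natCast]
  refine ⟨m + p.natDegree + 1, ?_⟩
  show ((L + M) ^ (m + p.natDegree + 1)) p = 0
  rw [hcomm.add_pow]
  rw [LinearMap.coe_sum, Finset.sum_apply]
  apply Finset.sum_eq_zero
  intro i hi
  rw [Finset.mem_range] at hi
  rw [Module.End.mul_apply, Module.End.mul_apply]
  have hcast : ((((m + p.natDegree + 1).choose i : ℕ) : Module.End k (Polynomial C))) p =
      ((m + p.natDegree + 1).choose i : ℕ) • p := by
    simp [Module.End.natCast_apply]
  rw [hcast, map_nsmul, map_nsmul]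
  by_cases hj : p.natDegree < m + p.natDegree + 1 - i
  · rw [hMpow, Polynomial.iterate_derivative_eq_zero hj, map_zero, smul_zero]
  · -- then i ≥ m + 1 > m
    push_neg at hj
    have him : m ≤ i := by omega
    have hq : ∀ j n, (D.toLinearMap ^ m) (((M ^ j) p).coeff n) = 0 := by
      intro j
      induction j with
      | zero => simpa using hm
      | succ t ih =>
          intro n
          have hstep : (M ^ (t + 1)) p = Polynomial.derivative ((M ^ t) p) := by
            rw [pow_succ', Module.End.mul_apply]
            rfl
          rw [hstep]
          exact derivative_closure _ _ _ ih n
    have : (L ^ i) ((M ^ (m + p.natDegree + 1 - i)) p) = 0 := by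
      apply Polynomial.ext
      intro n
      rw [coeff_pow_mapCoeff, Polynomial.coeff_zero]
      exact pow_eventually_zero _ (hq _ n) him
    rw [this, smul_zero]

lemma extDer_zero_apply (p : Polynomial C) :
    extDer (0 : Derivation k C C) p = Polynomial.derivative p := by
  rw [extDer_apply]
  convert zero_add _
  apply Polynomial.ext
  intro n
  rw [coeff_mapCoeff, Polynomial.coeff_zero]
  rfl

end Aux

/-- `ML*(C[T]) ⊆ ML(C)` for an affine domain `C` over a field of characteristic zero. -/
theorem stmt_9 {k C : Type*} [Field k] [CharZero k] [CommRing C] [IsDomain C] [Algebra k C]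
    [Algebra.FiniteType k C] :
    ∀ p : Polynomial C, p ∈ MLstar k (B := Polynomial C) →
      ∃ c : C, c ∈ ML k (B := C) ∧ p = Polynomial.C c := by
  intro p hp
  have hmem : ∀ D : Derivation k (Polynomial C) (Polynomial C),
      IsLND D → HasSlice D → D p = 0 := by
    intro D h1 h2
    simp only [MLstar] at hp
    have h3 := Algebra.mem_iInf.1 hp D
    exact Algebra.mem_iInf.1 h3 ⟨h1, h2⟩
  haveI : CharZero C := charZero_of_injective_algebraMap (algebraMap k C).injective
  have hLND0 : IsLND (0 : Derivation k C C) := fun b => ⟨1, by simp⟩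
  have hder : Polynomial.derivative p = 0 := by
    rw [← extDer_zero_apply (k := k) p]
    exact hmem _ (extDer_isLND 0 hLND0) ⟨Polynomial.X, extDer_X 0⟩
  have hdeg : p.natDegree = 0 := Polynomial.natDegree_eq_zero_of_derivative_eq_zero hder
  refine ⟨p.coeff 0, ?_, Polynomial.eq_C_of_natDegree_eq_zero hdeg⟩
  simp only [ML]
  rw [Algebra.mem_iInf]
  intro D
  rw [Algebra.mem_iInf]
  intro hDmem
  rw [mem_lndKer_iff]
  have h0 : extDer D p = 0 := hmem _ (extDer_isLND D hDmem) ⟨Polynomial.X, extDer_X D⟩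
  rw [Polynomial.eq_C_of_natDegree_eq_zero hdeg, extDer_C] at h0
  exact Polynomial.C_eq_zero.1 h0
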